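/- Let π(A) = ∏_{B : B is not a refinement of A} (A − A·B), a product in the partition algebra over all partitions B not finer than or equal to A (where for A equal to the trivial partition, π(A) = A). Then for every partition B not finer than or equal to A, B·π(A) = 0. -/

import Mathlib

/- The partition algebra: the free ℚ-algebra on the commutative monoid of
partitions of `{1,…,n}` (setoids on `Fin n`) under join, with unit the
discrete partition `⊥`. -/

def PartM (n : ℕ) := Setoid (Fin n)

instance (n : ℕ) : CommMonoid (PartM n) where
  mul a b := ((a : Setoid (Fin n)) ⊔ (b : Setoid (Fin n)) : Setoid (Fin n))
  one := (⊥ : Setoid (Fin n))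
  mul_assoc a b c := sup_assoc (α := Setoid (Fin n)) a b c
  one_mul a := bot_sup_eq (α := Setoid (Fin n)) a
  mul_one a := sup_bot_eq (α := Setoid (Fin n)) a
  mul_comm a b := sup_comm (α := Setoid (Fin n)) a b

/-- The basis element of the partition algebra corresponding to a partition. -/
noncomputable def partBasis (n : ℕ) (A : Setoid (Fin n)) : MonoidAlgebra ℚ (PartM n) :=
  MonoidAlgebra.of ℚ (PartM n) A

/- `π(A) = ∏_{B : ¬ B ≤ A} (A − A·B)`, with `π` of the trivial partition `⊤`
set to be `⊤` itself. -/

open scoped Classical in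
noncomputable def piOp (n : ℕ) (A : Setoid (Fin n)) : MonoidAlgebra ℚ (PartM n) :=
  if A = ⊤ then partBasis n A
  else ∏ᶠ (B : Setoid (Fin n)) (_ : ¬ B ≤ A), (partBasis n A - partBasis n (A ⊔ B))

lemma partBasis_mul (n : ℕ) (A B : Setoid (Fin n)) :
    partBasis n A * partBasis n B = partBasis n (A ⊔ B) := by
  unfold partBasis
  rw [← map_mul (M := PartM n) (MonoidAlgebra.of ℚ (PartM n)) A B]
  rfl

theorem mul_piOp_eq_zero {n : ℕ} (A B : Setoid (Fin n)) (h : ¬ B ≤ A) :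
    partBasis n B * piOp n A = 0 := by
  classical
  have hA : A ≠ ⊤ := fun hA => h (hA ▸ le_top)
  haveI : Finite (Setoid (Fin n)) :=
    Finite.of_injective (fun s => s.r) fun a b hab => Setoid.ext fun x y => by
      simp only at hab; rw [show a.r = b.r from hab]
  haveI : Fintype (Setoid (Fin n)) := Fintype.ofFinite _
  have hzero : partBasis n B * (partBasis n A - partBasis n (A ⊔ B)) = 0 := by
    rw [mul_sub, partBasis_mul, partBasis_mul]
    rw [show B ⊔ (A ⊔ B) = B ⊔ A by rw [sup_comm A B, ← sup_assoc, sup_idem]]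
    ring
  rw [piOp, if_neg hA]
  rw [finprod_cond_eq_prod_of_cond_iff
      (f := fun B' => partBasis n A - partBasis n (A ⊔ B'))
      (t := Finset.univ.filter (fun B' => ¬ B' ≤ A))
      (fun {i} _ => by simp)]
  rw [← Finset.mul_prod_erase _ _ (by simp [h] : B ∈ Finset.univ.filter (fun B' => ¬ B' ≤ A))]
  rw [← mul_assoc, hzero, zero_mul]
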